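/- Let Γ be a finite simple graph of order n and let k be an integer. If S is a global defensive k-alliance in Γ, then |S|² − k·|S| − n ≥ 0 (equivalently, |S|² ≥ k·|S| + n). -/

import Mathlib

/-- Number of neighbors that `v` has in `S`. -/
noncomputable def SimpleGraph.nbrCount {V : Type*} (G : SimpleGraph V) (S : Set V) (v : V) : ℕ :=
  (S ∩ {u | G.Adj v u}).ncard

/-- Degree of a vertex, counted via `ncard`. -/
noncomputable def SimpleGraph.degN {V : Type*} (G : SimpleGraph V) (v : V) : ℕ :=
  {u | G.Adj v u}.ncard

/-- `S` is a defensive `k`-alliance. -/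
def SimpleGraph.IsDefensiveAlliance {V : Type*} (G : SimpleGraph V) (k : ℤ) (S : Set V) : Prop :=
  S.Nonempty ∧ ∀ v ∈ S, (G.nbrCount Sᶜ v : ℤ) + k ≤ (G.nbrCount S v : ℤ)

/-- `S` is a dominating set. -/
def SimpleGraph.IsDominating {V : Type*} (G : SimpleGraph V) (S : Set V) : Prop :=
  ∀ v ∈ Sᶜ, ∃ u ∈ S, G.Adj v u

/-- `S` is a global defensive `k`-alliance. -/
def SimpleGraph.IsGlobalDefensiveAlliance {V : Type*} (G : SimpleGraph V) (k : ℤ) (S : Set V) : Prop :=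
  G.IsDefensiveAlliance k S ∧ G.IsDominating S

/-- Global defensive `k`-alliance number. -/
noncomputable def SimpleGraph.globalDefensiveAllianceNumber {V : Type*} (G : SimpleGraph V) (k : ℤ) : ℕ :=
  sInf {m | ∃ S : Set V, G.IsGlobalDefensiveAlliance k S ∧ S.ncard = m}

theorem global_defensive_alliance_quadratic {V : Type*} [Fintype V]
    (G : SimpleGraph V) (k : ℤ) (S : Set V)
    (hS : G.IsGlobalDefensiveAlliance k S) :
    0 ≤ (S.ncard : ℤ) ^ 2 - k * (S.ncard : ℤ) - (Fintype.card V : ℤ) := by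
  classical
  obtain ⟨⟨hne, hdef⟩, hdom⟩ := hS
  set Sf : Finset V := S.toFinset with hSf
  have hcard : S.ncard = Sf.card := Set.ncard_eq_toFinset_card' S
  have hnbr : ∀ (T : Set V) (v : V),
      G.nbrCount T v = (T.toFinset.filter (fun u => G.Adj v u)).card := by
    intro T v
    rw [SimpleGraph.nbrCount, Set.ncard_eq_toFinset_card']
    congr 1
    ext u
    simp
  -- symmetry of edge-count between S and its complement
  have hsym : ∑ v ∈ Sf, (G.nbrCount Sᶜ v : ℤ) = ∑ v ∈ Sfᶜ, (G.nbrCount S v : ℤ) := by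
    have hc : (Sᶜ : Set V).toFinset = Sfᶜ := by simp [hSf]
    have key : ∀ (A B : Finset V), ∑ v ∈ A, ((B.filter (fun u => G.Adj v u)).card : ℤ)
        = ∑ u ∈ B, ((A.filter (fun v => G.Adj u v)).card : ℤ) := by
      intro A B
      simp only [Finset.card_filter]
      push_cast
      rw [Finset.sum_comm]
      refine Finset.sum_congr rfl fun u _ => Finset.sum_congr rfl fun v _ => ?_
      simp [G.adj_comm]
    calc ∑ v ∈ Sf, (G.nbrCount Sᶜ v : ℤ)
        = ∑ v ∈ Sf, (((Sfᶜ).filter (fun u => G.Adj v u)).card : ℤ) := by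
          refine Finset.sum_congr rfl fun v _ => ?_
          rw [hnbr]
          norm_cast
          congr 1
          ext u
          simp [hSf, Set.mem_toFinset]
      _ = ∑ u ∈ Sfᶜ, ((Sf.filter (fun v => G.Adj u v)).card : ℤ) := key Sf Sfᶜ
      _ = ∑ v ∈ Sfᶜ, (G.nbrCount S v : ℤ) := by
          refine Finset.sum_congr rfl fun v _ => ?_; rw [hnbr]
  -- lower bound: each vertex outside S has a neighbor in S
  have hlow : (Sfᶜ.card : ℤ) ≤ ∑ v ∈ Sfᶜ, (G.nbrCount S v : ℤ) := by
    have : ∀ v ∈ Sfᶜ, (1 : ℤ) ≤ (G.nbrCount S v : ℤ) := by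
      intro v hv
      have hvS : v ∈ Sᶜ := by
        simpa [hSf, Set.mem_toFinset] using hv
      obtain ⟨u, huS, hadj⟩ := hdom v hvS
      have : u ∈ S.toFinset.filter (fun u => G.Adj v u) := by
        simp [Set.mem_toFinset, huS, hadj]
      have h1 : 1 ≤ G.nbrCount S v := by
        rw [hnbr]
        exact Finset.card_pos.mpr ⟨u, this⟩
      exact_mod_cast h1
    calc (Sfᶜ.card : ℤ) = ∑ _v ∈ Sfᶜ, (1 : ℤ) := by simp
      _ ≤ _ := Finset.sum_le_sum this
  -- upper bound: each vertex in S has at most |S| - 1 neighbors in S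
  have hup : ∀ v ∈ Sf, (G.nbrCount S v : ℤ) ≤ (Sf.card : ℤ) - 1 := by
    intro v hv
    have hsub : S.toFinset.filter (fun u => G.Adj v u) ⊆ Sf.erase v := by
      intro u hu
      simp only [Finset.mem_filter] at hu
      refine Finset.mem_erase.mpr ⟨fun h => G.loopless.irrefl v (h ▸ hu.2), hu.1⟩
    have := Finset.card_le_card hsub
    have hle : G.nbrCount S v ≤ Sf.card - 1 := by
      rw [hnbr]
      simpa [Finset.card_erase_of_mem hv] using this
    have hpos : 1 ≤ Sf.card := Finset.card_pos.mpr ⟨v, hv⟩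
    have : (G.nbrCount S v : ℤ) ≤ ((Sf.card - 1 : ℕ) : ℤ) := by exact_mod_cast hle
    calc (G.nbrCount S v : ℤ) ≤ ((Sf.card - 1 : ℕ) : ℤ) := this
      _ = (Sf.card : ℤ) - 1 := by
        have : (1:ℕ) ≤ Sf.card := hpos
        push_cast [this]
        ring
  -- combine
  have hmain : (Sfᶜ.card : ℤ) ≤ (Sf.card : ℤ) * ((Sf.card : ℤ) - 1) - k * Sf.card := by
    calc (Sfᶜ.card : ℤ) ≤ ∑ v ∈ Sfᶜ, (G.nbrCount S v : ℤ) := hlow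
      _ = ∑ v ∈ Sf, (G.nbrCount Sᶜ v : ℤ) := hsym.symm
      _ ≤ ∑ v ∈ Sf, ((G.nbrCount S v : ℤ) - k) := by
          refine Finset.sum_le_sum fun v hv => ?_
          have hvS : v ∈ S := by simpa [hSf, Set.mem_toFinset] using hv
          linarith [hdef v hvS]
      _ ≤ ∑ v ∈ Sf, (((Sf.card : ℤ) - 1) - k) := by
          refine Finset.sum_le_sum fun v hv => ?_
          linarith [hup v hv]
      _ = (Sf.card : ℤ) * ((Sf.card : ℤ) - 1) - k * Sf.card := by
          rw [Finset.sum_const]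
          ring
  have hcompl : (Sfᶜ.card : ℤ) = (Fintype.card V : ℤ) - Sf.card := by
    have := Finset.card_compl Sf
    have hle : Sf.card ≤ Fintype.card V := Finset.card_le_univ Sf
    rw [this]
    push_cast [hle]
    ring
  rw [hcard]
  rw [hcompl] at hmain
  nlinarith [hmain]
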